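/- arXiv:2306.02387 — 2 statements merged into one kernel-verified Lean document; each statement's English description precedes it below -/
import Mathlib

section
/- Let a ∈ L^∞(ℝ) have finite limits a(−∞) = lim_{y→−∞} a(y) and a(+∞) = lim_{y→+∞} a(y). Then the matrix-valued function φ^a(t₁,t₂) = ∫_ℝ a((−t₁+s)/(2√(t₂(t₁²+1)))) H(s)[H(s)]^T ds on Π = ℝ × (0,∞) satisfies: for every ε > 0 there exist δ > 0 and Nₒ > 0 such that ‖φ^a(t₁,t₂) − a(−∞)·I‖ < ε whenever 0 < t₂ < δ and t₁ > Nₒ; and analogously ‖φ^a(t₁,t₂) − a(+∞)·I‖ < ε whenever 0 < t₂ < δ and t₁ < −Nₒ (for suitable δ, Nₒ). That is, lim_{(t₁,t₂)→(+∞,0)} φ^a(t₁,t₂) = a(−∞)·I and lim_{(t₁,t₂)→(−∞,0)} φ^a(t₁,t₂) = a(+∞)·I. -/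
open MeasureTheory Filter Topology
open scoped Matrix.Norms.L2Operator

noncomputable section

/-- The physicists' Hermite polynomial `H_m(y) = (−1)^m e^{y²} (d/dy)^m e^{−y²}`. -/
def hermiteH (m : ℕ) (y : ℝ) : ℝ :=
  (-1 : ℝ) ^ m * Real.exp (y ^ 2) * iteratedDeriv m (fun x => Real.exp (-x ^ 2)) y

/-- The Hermite function `h_m(y) = (2^m m! √π)^{−1/2} H_m(y) e^{−y²/2}`. -/
def hermiteFun (m : ℕ) (y : ℝ) : ℝ :=
  (Real.sqrt (2 ^ m * m.factorial * Real.sqrt Real.pi))⁻¹ * hermiteH m y *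
    Real.exp (-y ^ 2 / 2)

/-- The matrix `H(y)[H(y)]ᵀ`, where `H(y) = (h_0(y), …, h_{n−1}(y))ᵀ`. -/
def HHT (n : ℕ) (y : ℝ) : Matrix (Fin n) (Fin n) ℝ :=
  Matrix.of fun j k : Fin n => hermiteFun j y * hermiteFun k y

/-- `φ^a(t₁,t₂) = ∫_ℝ a((−t₁+s)/(2√(t₂(t₁²+1)))) H(s)[H(s)]ᵀ ds` as a complex matrix. -/
def phiA (n : ℕ) (a : ℝ → ℂ) (t₁ t₂ : ℝ) : Matrix (Fin n) (Fin n) ℂ :=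
  Matrix.of fun j k : Fin n =>
    ∫ s : ℝ, a ((-t₁ + s) / (2 * Real.sqrt (t₂ * (t₁ ^ 2 + 1)))) * (HHT n s j k : ℂ)

open Polynomial

set_option maxHeartbeats 1600000

def Hpoly : ℕ → Polynomial ℝ
  | 0 => 1
  | m + 1 => C 2 * X * Hpoly m - derivative (Hpoly m)

lemma gauss_hasDerivAt (y : ℝ) :
    HasDerivAt (fun x : ℝ => Real.exp (-x ^ 2)) (-2 * y * Real.exp (-y ^ 2)) y := by
  have h1 : HasDerivAt (fun x : ℝ => -x ^ 2) (-(2 * y)) y := by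
    exact ((hasDerivAt_pow 2 y).neg).congr_deriv (by norm_num)
  simpa [mul_comm, mul_assoc, mul_left_comm] using h1.exp

lemma iteratedDeriv_gauss (m : ℕ) (y : ℝ) :
    iteratedDeriv m (fun x => Real.exp (-x ^ 2)) y
      = (-1 : ℝ) ^ m * ((Hpoly m).eval y * Real.exp (-y ^ 2)) := by
  induction m generalizing y with
  | zero => simp [Hpoly]
  | succ m ih =>
    have ih' : iteratedDeriv m (fun x => Real.exp (-x ^ 2))
        = fun y => (-1 : ℝ) ^ m * ((Hpoly m).eval y * Real.exp (-y ^ 2)) := funext ih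
    have hd : HasDerivAt (fun y : ℝ => (-1 : ℝ) ^ m * ((Hpoly m).eval y * Real.exp (-y ^ 2)))
        ((-1 : ℝ) ^ m * ((derivative (Hpoly m)).eval y * Real.exp (-y ^ 2)
          + (Hpoly m).eval y * (-2 * y * Real.exp (-y ^ 2)))) y :=
      (((Hpoly m).hasDerivAt y).mul (gauss_hasDerivAt y)).const_mul _
    rw [iteratedDeriv_succ, ih', hd.deriv]
    have : (Hpoly (m + 1)).eval y
        = 2 * y * (Hpoly m).eval y - (derivative (Hpoly m)).eval y := by
      simp [Hpoly]
    rw [this]; ring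

lemma hermiteH_eq (m : ℕ) (y : ℝ) : hermiteH m y = (Hpoly m).eval y := by
  have h2 : ((-1 : ℝ)) ^ m * (-1) ^ m = 1 := by rw [← mul_pow]; norm_num
  have h3 : Real.exp (y ^ 2) * Real.exp (-y ^ 2) = 1 := by
    rw [← Real.exp_add]; simp
  unfold hermiteH
  rw [iteratedDeriv_gauss]
  calc (-1 : ℝ) ^ m * Real.exp (y ^ 2) * ((-1) ^ m * ((Hpoly m).eval y * Real.exp (-y ^ 2)))
      = ((-1 : ℝ) ^ m * (-1) ^ m) * (Real.exp (y ^ 2) * Real.exp (-y ^ 2)) * (Hpoly m).eval y := by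
        ring
    _ = (Hpoly m).eval y := by rw [h2, h3]; ring

lemma Hpoly_deg_coeff (m : ℕ) : (Hpoly m).natDegree = m ∧ (Hpoly m).coeff m = 2 ^ m := by
  induction m with
  | zero => simp [Hpoly]
  | succ m ih =>
    obtain ⟨hd, hc⟩ := ih
    have hne : Hpoly m ≠ 0 := by
      intro h; rw [h, coeff_zero] at hc
      exact absurd hc.symm (by positivity)
    have hXd : (C (2:ℝ) * X).natDegree = 1 := by
      simpa using natDegree_C_mul_X (2 : ℝ) two_ne_zero
    have hXne : (C (2:ℝ) * X) ≠ 0 := by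
      intro h; rw [h] at hXd; simp at hXd
    have h1 : (C (2:ℝ) * X * Hpoly m).natDegree = m + 1 := by
      rw [natDegree_mul hXne hne, hXd, hd]; ring
    have h2 : (derivative (Hpoly m)).natDegree < m + 1 := by
      have := natDegree_derivative_le (Hpoly m)
      omega
    have hs : Hpoly (m + 1) = C (2:ℝ) * X * Hpoly m - derivative (Hpoly m) := rfl
    constructor
    · rw [hs, natDegree_sub_eq_left_of_natDegree_lt (by rw [h1]; exact h2), h1]
    · rw [hs, coeff_sub, coeff_eq_zero_of_natDegree_lt h2]
      rw [mul_assoc, coeff_C_mul, coeff_X_mul, hc]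
      ring

lemma integrable_pow_gauss (i : ℕ) : Integrable fun x : ℝ => x ^ i * Real.exp (-x ^ 2) := by
  have hg : Integrable (fun x : ℝ => Real.exp (-(1/2 : ℝ) * x ^ 2)) :=
    integrable_exp_neg_mul_sq (by norm_num)
  refine (hg.const_mul ((i.factorial : ℝ) * Real.exp (1/2))).mono' ?_ ?_
  · exact ((continuous_pow i).mul
      (Real.continuous_exp.comp (continuous_pow 2).neg)).aestronglyMeasurable
  · filter_upwards with x
    have hfac : (0:ℝ) < i.factorial := by exact_mod_cast i.factorial_pos
    have h1 : |x| ^ i ≤ i.factorial * Real.exp |x| := by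
      have h := Real.pow_div_factorial_le_exp |x| (abs_nonneg x) i
      rw [div_le_iff₀ hfac] at h
      linarith [h]
    have h2 : Real.exp |x| * Real.exp (-x ^ 2) ≤ Real.exp (1/2) * Real.exp (-(1/2) * x ^ 2) := by
      rw [← Real.exp_add, ← Real.exp_add]
      apply Real.exp_le_exp.mpr
      nlinarith [sq_nonneg (|x| - 1), sq_abs x]
    have hxe : ‖x ^ i * Real.exp (-x ^ 2)‖ = |x| ^ i * Real.exp (-x ^ 2) := by
      rw [norm_mul, norm_pow, Real.norm_eq_abs, Real.norm_eq_abs,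
        abs_of_pos (Real.exp_pos _)]
    rw [hxe]
    calc |x| ^ i * Real.exp (-x ^ 2) ≤ (i.factorial * Real.exp |x|) * Real.exp (-x ^ 2) := by
          apply mul_le_mul_of_nonneg_right h1 (Real.exp_pos _).le
      _ = i.factorial * (Real.exp |x| * Real.exp (-x ^ 2)) := by ring
      _ ≤ i.factorial * (Real.exp (1/2) * Real.exp (-(1/2) * x ^ 2)) := by
          exact mul_le_mul_of_nonneg_left h2 hfac.le
      _ = i.factorial * Real.exp (1/2) * Real.exp (-(1/2) * x ^ 2) := by ring

lemma integrable_polyGauss (p : ℝ[X]) :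
    Integrable fun x : ℝ => p.eval x * Real.exp (-x ^ 2) := by
  have he : (fun x : ℝ => p.eval x * Real.exp (-x ^ 2))
      = fun x => ∑ i ∈ Finset.range (p.natDegree + 1),
          p.coeff i * (x ^ i * Real.exp (-x ^ 2)) := by
    funext x
    rw [eval_eq_sum_range, Finset.sum_mul]
    exact Finset.sum_congr rfl fun i _ => by ring
  rw [he]
  exact integrable_finset_sum _ fun i _ => (integrable_pow_gauss i).const_mul _

lemma integrable_poly_iterGauss (R : ℝ[X]) (m : ℕ) :
    Integrable fun x : ℝ => R.eval x * iteratedDeriv m (fun x : ℝ => Real.exp (-x ^ 2)) x := by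
  apply ((integrable_polyGauss (R * Hpoly m)).const_mul ((-1:ℝ)^m)).congr
  filter_upwards with x
  rw [iteratedDeriv_gauss]
  simp only [eval_mul]
  ring

lemma ibp_polyGauss (k : ℕ) : ∀ Q : ℝ[X],
    (∫ y : ℝ, Q.eval y * iteratedDeriv k (fun x : ℝ => Real.exp (-x ^ 2)) y)
      = (-1 : ℝ) ^ k * ∫ y : ℝ, (derivative^[k] Q).eval y * Real.exp (-y ^ 2) := by
  induction k with
  | zero => intro Q; simp [iteratedDeriv_zero]
  | succ k ih =>
    intro Q
    set gauss : ℝ → ℝ := fun x => Real.exp (-x ^ 2) with hgauss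
    have hv : ∀ x : ℝ, HasDerivAt (iteratedDeriv k gauss)
        (iteratedDeriv (k + 1) gauss x) x := by
      intro x
      have hw : iteratedDeriv k gauss
          = fun y => (-1 : ℝ) ^ k * ((Hpoly k).eval y * Real.exp (-y ^ 2)) :=
        funext (iteratedDeriv_gauss k)
      have hder : HasDerivAt (fun y : ℝ => (-1 : ℝ) ^ k * ((Hpoly k).eval y * Real.exp (-y ^ 2)))
          ((-1:ℝ) ^ k * ((derivative (Hpoly k)).eval x * Real.exp (-x ^ 2)
            + (Hpoly k).eval x * (-2 * x * Real.exp (-x ^ 2)))) x :=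
        (((Hpoly k).hasDerivAt x).mul (gauss_hasDerivAt x)).const_mul _
      rw [hw]
      convert hder using 1
      rw [iteratedDeriv_succ, hw]
      rw [hder.deriv]
    have hibp := MeasureTheory.integral_mul_deriv_eq_deriv_mul_of_integrable
      (u := fun x => Q.eval x) (u' := fun x => (derivative Q).eval x)
      (v := iteratedDeriv k gauss) (v' := fun x => iteratedDeriv (k + 1) gauss x)
      (fun x _ => Q.hasDerivAt x) (fun x _ => hv x)
      (by simpa [Pi.mul_def] using integrable_poly_iterGauss Q (k + 1))
      (by simpa [Pi.mul_def] using integrable_poly_iterGauss (derivative Q) k)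
      (by simpa [Pi.mul_def] using integrable_poly_iterGauss Q k)
    rw [hibp, ih (derivative Q), Function.iterate_succ_apply, pow_succ]
    ring

lemma integral_gauss_eq : (∫ y : ℝ, Real.exp (-y ^ 2)) = Real.sqrt Real.pi := by
  have := integral_gaussian 1
  simpa using this

lemma integral_Hpoly_mul_gauss (j k : ℕ) :
    (∫ y : ℝ, (Hpoly j).eval y * ((Hpoly k).eval y * Real.exp (-y ^ 2)))
      = if j = k then 2 ^ j * j.factorial * Real.sqrt Real.pi else 0 := by
  have key : ∀ j k : ℕ, (∫ y : ℝ, (Hpoly j).eval y * ((Hpoly k).eval y * Real.exp (-y ^ 2)))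
      = ∫ y : ℝ, (derivative^[k] (Hpoly j)).eval y * Real.exp (-y ^ 2) := by
    intro j k
    have h1 : ∀ y : ℝ, (Hpoly j).eval y * ((Hpoly k).eval y * Real.exp (-y ^ 2))
        = (-1:ℝ) ^ k * ((Hpoly j).eval y
            * iteratedDeriv k (fun x : ℝ => Real.exp (-x ^ 2)) y) := by
      intro y
      rw [iteratedDeriv_gauss]
      have hone : ((-1:ℝ)) ^ k * (-1) ^ k = 1 := by rw [← mul_pow]; norm_num
      linear_combination (-(eval y (Hpoly j) * eval y (Hpoly k) * Real.exp (-y ^ 2))) * hone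
    calc (∫ y : ℝ, (Hpoly j).eval y * ((Hpoly k).eval y * Real.exp (-y ^ 2)))
        = ∫ y : ℝ, (-1:ℝ) ^ k * ((Hpoly j).eval y
            * iteratedDeriv k (fun x : ℝ => Real.exp (-x ^ 2)) y) :=
          integral_congr_ae (Filter.Eventually.of_forall fun y => h1 y)
      _ = (-1:ℝ) ^ k * ∫ y : ℝ, (Hpoly j).eval y
            * iteratedDeriv k (fun x : ℝ => Real.exp (-x ^ 2)) y := integral_const_mul _ _
      _ = (-1:ℝ) ^ k * ((-1:ℝ) ^ k
            * ∫ y : ℝ, (derivative^[k] (Hpoly j)).eval y * Real.exp (-y ^ 2)) := by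
          rw [ibp_polyGauss k (Hpoly j)]
      _ = _ := by rw [← mul_assoc, ← mul_pow]; norm_num
  rcases lt_trichotomy j k with h | h | h
  · rw [key, Polynomial.iterate_derivative_eq_zero (by rw [(Hpoly_deg_coeff j).1]; exact h),
      if_neg h.ne]
    simp
  · subst h
    rw [key, if_pos rfl]
    have hdeg : (derivative^[j] (Hpoly j)).natDegree = 0 := by
      have h2 := natDegree_iterate_derivative (Hpoly j) j
      rw [(Hpoly_deg_coeff j).1] at h2
      omega
    have hD : derivative^[j] (Hpoly j) = C ((j.factorial : ℝ) * 2 ^ j) := by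
      rw [Polynomial.eq_C_of_natDegree_eq_zero hdeg, coeff_iterate_derivative]
      simp [(Hpoly_deg_coeff j).2, Nat.descFactorial_self, nsmul_eq_mul]
    rw [hD]
    simp only [eval_C]
    rw [integral_const_mul, integral_gauss_eq]
    ring
  · have hsym : (∫ y : ℝ, (Hpoly j).eval y * ((Hpoly k).eval y * Real.exp (-y ^ 2)))
        = ∫ y : ℝ, (Hpoly k).eval y * ((Hpoly j).eval y * Real.exp (-y ^ 2)) :=
      integral_congr_ae (Filter.Eventually.of_forall fun y => by ring)
    rw [hsym, key, Polynomial.iterate_derivative_eq_zero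
        (by rw [(Hpoly_deg_coeff k).1]; exact h), if_neg h.ne']
    simp

lemma hermiteFun_eq (m : ℕ) (y : ℝ) :
    hermiteFun m y = (Real.sqrt (2 ^ m * m.factorial * Real.sqrt Real.pi))⁻¹
      * (Hpoly m).eval y * Real.exp (-y ^ 2 / 2) := by
  unfold hermiteFun; rw [hermiteH_eq]

lemma exp_half_sq (y : ℝ) :
    Real.exp (-y ^ 2 / 2) * Real.exp (-y ^ 2 / 2) = Real.exp (-y ^ 2) := by
  rw [← Real.exp_add]; ring_nf

lemma continuous_hermiteFun (m : ℕ) : Continuous (hermiteFun m) := by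
  have : hermiteFun m = fun y => (Real.sqrt (2 ^ m * m.factorial * Real.sqrt Real.pi))⁻¹
      * (Hpoly m).eval y * Real.exp (-y ^ 2 / 2) := funext (hermiteFun_eq m)
  rw [this]
  fun_prop

lemma hermiteFun_mul_eq (j k : ℕ) (y : ℝ) :
    hermiteFun j y * hermiteFun k y
      = (Real.sqrt (2 ^ j * j.factorial * Real.sqrt Real.pi))⁻¹
        * (Real.sqrt (2 ^ k * k.factorial * Real.sqrt Real.pi))⁻¹
        * ((Hpoly j).eval y * ((Hpoly k).eval y * Real.exp (-y ^ 2))) := by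
  rw [hermiteFun_eq, hermiteFun_eq, ← exp_half_sq y]
  ring

lemma integrable_hermiteFun_mul (j k : ℕ) :
    Integrable fun y : ℝ => hermiteFun j y * hermiteFun k y := by
  apply ((integrable_polyGauss (Hpoly j * Hpoly k)).const_mul
    ((Real.sqrt (2 ^ j * j.factorial * Real.sqrt Real.pi))⁻¹
      * (Real.sqrt (2 ^ k * k.factorial * Real.sqrt Real.pi))⁻¹)).congr
  filter_upwards with y
  rw [hermiteFun_mul_eq]
  simp only [eval_mul]
  ring

lemma integral_hermiteFun_mul (j k : ℕ) :
    (∫ y : ℝ, hermiteFun j y * hermiteFun k y) = if j = k then (1:ℝ) else 0 := by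
  have h1 : (∫ y : ℝ, hermiteFun j y * hermiteFun k y)
      = (Real.sqrt (2 ^ j * j.factorial * Real.sqrt Real.pi))⁻¹
        * (Real.sqrt (2 ^ k * k.factorial * Real.sqrt Real.pi))⁻¹
        * ∫ y : ℝ, (Hpoly j).eval y * ((Hpoly k).eval y * Real.exp (-y ^ 2)) := by
    rw [← integral_const_mul]
    exact integral_congr_ae (Filter.Eventually.of_forall fun y => by
      show hermiteFun j y * hermiteFun k y = _
      rw [hermiteFun_mul_eq])
  rw [h1, integral_Hpoly_mul_gauss]
  by_cases h : j = k
  · subst h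
    simp only [if_pos rfl]
    have hA : (0:ℝ) < 2 ^ j * j.factorial * Real.sqrt Real.pi := by
      have := Real.sqrt_pos.mpr Real.pi_pos
      have := j.factorial_pos
      positivity
    have hs : Real.sqrt (2 ^ j * j.factorial * Real.sqrt Real.pi)
        * Real.sqrt (2 ^ j * j.factorial * Real.sqrt Real.pi)
        = 2 ^ j * j.factorial * Real.sqrt Real.pi := Real.mul_self_sqrt hA.le
    rw [← mul_inv, hs]
    exact inv_mul_cancel₀ hA.ne'
  · simp [h]

lemma norm_le_sum_entries {n : ℕ} (A : Matrix (Fin n) (Fin n) ℂ) {b : ℝ}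
    (hb : 0 ≤ b) (h : ∀ j k, ‖A j k‖ ≤ b) :
    ‖A‖ ≤ b * ∑ j : Fin n, ∑ k : Fin n,
      ‖(Matrix.single j k (1:ℂ) : Matrix (Fin n) (Fin n) ℂ)‖ := by
  calc ‖A‖ = ‖∑ j : Fin n, ∑ k : Fin n, Matrix.single j k (A j k)‖ := by
        rw [← Matrix.matrix_eq_sum_single A]
    _ ≤ ∑ j : Fin n, ∑ k : Fin n, ‖Matrix.single j k (A j k)‖ :=
        (norm_sum_le _ _).trans (Finset.sum_le_sum fun j _ => norm_sum_le _ _)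
    _ ≤ ∑ j : Fin n, ∑ k : Fin n,
          b * ‖(Matrix.single j k (1:ℂ) : Matrix (Fin n) (Fin n) ℂ)‖ := by
        refine Finset.sum_le_sum fun j _ => Finset.sum_le_sum fun k _ => ?_
        have heq : (Matrix.single j k (A j k) : Matrix (Fin n) (Fin n) ℂ)
            = A j k • Matrix.single j k (1:ℂ) := by
          rw [Matrix.smul_single, smul_eq_mul, mul_one]
        rw [heq, norm_smul]
        exact mul_le_mul_of_nonneg_right (h j k) (norm_nonneg _)
    _ = _ := by rw [Finset.mul_sum]; exact Finset.sum_congr rfl fun j _ => (Finset.mul_sum _ _ _).symm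

lemma tail_small {g : ℝ → ℝ} (hg : Integrable g) (hg0 : ∀ x, 0 ≤ g x) {ε : ℝ} (hε : 0 < ε) :
    ∃ M : ℝ, 0 < M ∧ (∫ s in {x : ℝ | M ≤ |x|}, g s) < ε := by
  have hmeas : ∀ N : ℕ, MeasurableSet (Set.Icc (-(N:ℝ)) N) := fun N => measurableSet_Icc
  have hmono : Monotone (fun N : ℕ => Set.Icc (-(N:ℝ)) N) := fun i j hij =>
    Set.Icc_subset_Icc (neg_le_neg (by exact_mod_cast hij)) (by exact_mod_cast hij)
  have hunion : (⋃ N : ℕ, Set.Icc (-(N:ℝ)) N) = Set.univ := by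
    ext x
    simp only [Set.mem_iUnion, Set.mem_univ, iff_true, Set.mem_Icc]
    obtain ⟨N, hN⟩ := exists_nat_ge |x|
    exact ⟨N, (abs_le.mp hN).1, (abs_le.mp hN).2⟩
  have htend := tendsto_setIntegral_of_monotone hmeas hmono
    (by rw [hunion]; exact hg.integrableOn)
  rw [hunion, setIntegral_univ] at htend
  have hev : ∀ᶠ N : ℕ in atTop, (∫ x, g x) - ε < ∫ x in Set.Icc (-(N:ℝ)) N, g x :=
    htend.eventually (eventually_gt_nhds (by linarith))
  obtain ⟨N, hN⟩ := hev.exists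
  refine ⟨N + 1, by positivity, ?_⟩
  have hsub : {x : ℝ | (N:ℝ) + 1 ≤ |x|} ⊆ (Set.Icc (-(N:ℝ)) N)ᶜ := by
    intro x hx
    simp only [Set.mem_setOf_eq] at hx
    simp only [Set.mem_compl_iff, Set.mem_Icc, not_and_or, not_le]
    rcases abs_cases x with ⟨h1, _⟩ | ⟨h1, _⟩
    · right; linarith
    · left; linarith
  have h2 : (∫ s in {x : ℝ | (N:ℝ) + 1 ≤ |x|}, g s) ≤ ∫ s in (Set.Icc (-(N:ℝ)) N)ᶜ, g s :=
    setIntegral_mono_set hg.integrableOn (Filter.Eventually.of_forall hg0)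
      (Filter.Eventually.of_forall hsub)
  have h3 : (∫ s in Set.Icc (-(N:ℝ)) N, g s) + ∫ s in (Set.Icc (-(N:ℝ)) N)ᶜ, g s = ∫ x, g x :=
    integral_add_compl (hmeas N) hg
  linarith

lemma master (n : ℕ) (a : ℝ → ℂ) (ha_meas : Measurable a) (C : ℝ)
    (hC : ∀ y, ‖a y‖ ≤ C) (L : ℂ) (P : ℝ → ℝ → Prop)
    (hreg : ∀ ε' > (0:ℝ), ∀ M > (0:ℝ), ∃ δ > (0:ℝ), ∃ N > (0:ℝ), ∀ t₁ t₂ : ℝ,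
      0 < t₂ → t₂ < δ → P N t₁ → ∀ s : ℝ, |s| ≤ M →
        ‖a ((-t₁ + s) / (2 * Real.sqrt (t₂ * (t₁ ^ 2 + 1)))) - L‖ ≤ ε')
    {ε : ℝ} (hε : 0 < ε) :
    ∃ δ > (0:ℝ), ∃ N > (0:ℝ), ∀ t₁ t₂ : ℝ, 0 < t₂ → t₂ < δ → P N t₁ →
      ‖phiA n a t₁ t₂ - L • (1 : Matrix (Fin n) (Fin n) ℂ)‖ < ε := by
  have hC0 : 0 ≤ C := le_trans (norm_nonneg _) (hC 0)
  set g : ℝ → ℝ := fun s => ∑ j ∈ Finset.range n, (hermiteFun j s) ^ 2 with hgdef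
  have hg_int : Integrable g := by
    apply integrable_finset_sum
    intro j _
    simpa [pow_two] using integrable_hermiteFun_mul j j
  have hg0 : ∀ s, 0 ≤ g s := fun s => Finset.sum_nonneg fun j _ => sq_nonneg _
  have hgbd : ∀ (j k : Fin n) (s : ℝ), |hermiteFun j s * hermiteFun k s| ≤ g s := by
    intro j k s
    have h1 : (hermiteFun j s) ^ 2 ≤ g s :=
      Finset.single_le_sum (f := fun i => hermiteFun i s ^ 2)
        (fun i _ => sq_nonneg _) (Finset.mem_range.mpr j.2)
    have h2 : (hermiteFun k s) ^ 2 ≤ g s :=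
      Finset.single_le_sum (f := fun i => hermiteFun i s ^ 2)
        (fun i _ => sq_nonneg _) (Finset.mem_range.mpr k.2)
    rcases abs_cases (hermiteFun j s * hermiteFun k s) with ⟨he, _⟩ | ⟨he, _⟩ <;> rw [he] <;>
      nlinarith [sq_nonneg (hermiteFun j s - hermiteFun k s),
        sq_nonneg (hermiteFun j s + hermiteFun k s)]
  set G := ∫ s, g s with hGdef
  have hG0 : 0 ≤ G := integral_nonneg hg0
  set K := ∑ j : Fin n, ∑ k : Fin n,
    ‖(Matrix.single j k (1:ℂ) : Matrix (Fin n) (Fin n) ℂ)‖ with hKdef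
  have hK0 : 0 ≤ K := Finset.sum_nonneg fun _ _ => Finset.sum_nonneg fun _ _ => norm_nonneg _
  set ε₁ := ε / (2 * (K + 1) * (G + 1)) with hε₁
  have hε₁0 : 0 < ε₁ := by positivity
  set ε₂ := ε / (2 * (K + 1) * (C + ‖L‖ + 1)) with hε₂
  have hε₂0 : 0 < ε₂ := by positivity
  obtain ⟨M, hM0, hMtail⟩ := tail_small hg_int hg0 hε₂0
  obtain ⟨δ, hδ0, N, hN0, hδN⟩ := hreg ε₁ hε₁0 M hM0
  refine ⟨δ, hδ0, N, hN0, ?_⟩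
  intro t₁ t₂ ht₂0 ht₂δ hP
  set τ := ∫ s in {x : ℝ | M ≤ |x|}, g s with hτdef
  have hτ0 : 0 ≤ τ := setIntegral_nonneg
    ((isClosed_le continuous_const continuous_abs).measurableSet) (fun x _ => hg0 x)
  have hsetmeas : MeasurableSet {x : ℝ | M ≤ |x|} :=
    (isClosed_le continuous_const continuous_abs).measurableSet
  set c : ℝ → ℝ := fun s => (-t₁ + s) / (2 * Real.sqrt (t₂ * (t₁ ^ 2 + 1))) with hcdef
  have hc_meas : Measurable c := by fun_prop
  have hbound_entry : ∀ j k : Fin n,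
      ‖(phiA n a t₁ t₂ - L • (1 : Matrix (Fin n) (Fin n) ℂ)) j k‖
        ≤ ε₁ * G + (C + ‖L‖) * τ := by
    intro j k
    have hmul_int : Integrable fun s : ℝ =>
        a (c s) * ((hermiteFun j s * hermiteFun k s : ℝ) : ℂ) :=
      Integrable.bdd_mul ((integrable_hermiteFun_mul j k).ofReal)
        ((ha_meas.comp hc_meas).aestronglyMeasurable) (Filter.Eventually.of_forall fun s => hC _)
    have hhh_int : Integrable fun s : ℝ => ((hermiteFun j s * hermiteFun k s : ℝ) : ℂ) :=
      (integrable_hermiteFun_mul j k).ofReal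
    have hentry : (phiA n a t₁ t₂ - L • (1 : Matrix (Fin n) (Fin n) ℂ)) j k
        = ∫ s : ℝ, (a (c s) - L) * ((hermiteFun j s * hermiteFun k s : ℝ) : ℂ) := by
      have horto : (∫ s : ℝ, ((hermiteFun j s * hermiteFun k s : ℝ) : ℂ))
          = ((if (j:ℕ) = (k:ℕ) then (1:ℝ) else 0 : ℝ) : ℂ) := by
        rw [show (∫ s : ℝ, ((hermiteFun j s * hermiteFun k s : ℝ) : ℂ))
            = ((∫ s : ℝ, hermiteFun j s * hermiteFun k s : ℝ) : ℂ) from integral_ofReal,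
          integral_hermiteFun_mul]
      have hsplit : (∫ s : ℝ, (a (c s) - L) * ((hermiteFun j s * hermiteFun k s : ℝ) : ℂ))
          = (∫ s : ℝ, a (c s) * ((hermiteFun j s * hermiteFun k s : ℝ) : ℂ))
            - L * ∫ s : ℝ, ((hermiteFun j s * hermiteFun k s : ℝ) : ℂ) := by
        rw [← integral_const_mul, ← integral_sub hmul_int (hhh_int.const_mul L)]
        exact integral_congr_ae (Filter.Eventually.of_forall fun s => by ring)
      rw [hsplit, horto]
      simp only [phiA, HHT, Matrix.sub_apply, Matrix.smul_apply, Matrix.one_apply,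
        Matrix.of_apply, smul_eq_mul, mul_ite, mul_one, mul_zero]
      by_cases h : j = k <;> simp [h, Fin.val_inj, hcdef]
    rw [hentry]
    have hφ_int : Integrable (fun s : ℝ =>
        ε₁ * g s + (C + ‖L‖) * Set.indicator {x : ℝ | M ≤ |x|} g s) :=
      (hg_int.const_mul _).add ((hg_int.indicator hsetmeas).const_mul _)
    have hptwise : ∀ s : ℝ,
        ‖(a (c s) - L) * ((hermiteFun j s * hermiteFun k s : ℝ) : ℂ)‖
          ≤ ε₁ * g s + (C + ‖L‖) * Set.indicator {x : ℝ | M ≤ |x|} g s := by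
      intro s
      rw [norm_mul, Complex.norm_real, Real.norm_eq_abs]
      rcases le_or_gt |s| M with hs | hs
      · have h1 : ‖a (c s) - L‖ ≤ ε₁ := hδN t₁ t₂ ht₂0 ht₂δ hP s hs
        have hind : 0 ≤ Set.indicator {x : ℝ | M ≤ |x|} g s :=
          Set.indicator_nonneg (fun x _ => hg0 x) s
        have h3 : ‖a (c s) - L‖ * |hermiteFun j s * hermiteFun k s| ≤ ε₁ * g s :=
          mul_le_mul h1 (hgbd j k s) (abs_nonneg _) hε₁0.le
        nlinarith [mul_nonneg hC0 (hg0 s), mul_nonneg (norm_nonneg L) (hg0 s),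
          mul_nonneg (add_nonneg hC0 (norm_nonneg L)) hind]
      · have h1 : ‖a (c s) - L‖ ≤ C + ‖L‖ :=
          (norm_sub_le _ _).trans (add_le_add (hC _) le_rfl)
        have hind : Set.indicator {x : ℝ | M ≤ |x|} g s = g s :=
          Set.indicator_of_mem (by exact hs.le) g
        have h3 : ‖a (c s) - L‖ * |hermiteFun j s * hermiteFun k s| ≤ (C + ‖L‖) * g s :=
          mul_le_mul h1 (hgbd j k s) (abs_nonneg _) (add_nonneg hC0 (norm_nonneg L))
        rw [hind]
        nlinarith [mul_nonneg hε₁0.le (hg0 s)]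
    calc ‖∫ s : ℝ, (a (c s) - L) * ((hermiteFun j s * hermiteFun k s : ℝ) : ℂ)‖
        ≤ ∫ s : ℝ, (ε₁ * g s + (C + ‖L‖) * Set.indicator {x : ℝ | M ≤ |x|} g s) :=
          norm_integral_le_of_norm_le hφ_int (Filter.Eventually.of_forall hptwise)
      _ = ε₁ * G + (C + ‖L‖) * τ := by
          rw [integral_add (hg_int.const_mul _) ((hg_int.indicator hsetmeas).const_mul _),
            integral_const_mul, integral_const_mul, integral_indicator hsetmeas]
  have hB0 : 0 ≤ ε₁ * G + (C + ‖L‖) * τ :=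
    add_nonneg (mul_nonneg hε₁0.le hG0) (mul_nonneg (add_nonneg hC0 (norm_nonneg L)) hτ0)
  have hnorm := norm_le_sum_entries (phiA n a t₁ t₂ - L • (1 : Matrix (Fin n) (Fin n) ℂ))
    hB0 hbound_entry
  rw [← hKdef] at hnorm
  have h1 : ε₁ * G * (2 * (K + 1)) < ε := by
    have ha : ε₁ * (G + 1) * (2 * (K + 1)) = ε := by
      rw [hε₁]; field_simp
    calc ε₁ * G * (2 * (K + 1)) < ε₁ * (G + 1) * (2 * (K + 1)) :=
          mul_lt_mul_of_pos_right
            (mul_lt_mul_of_pos_left (by linarith) hε₁0) (by positivity)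
      _ = ε := ha
  have h2 : (C + ‖L‖) * τ * (2 * (K + 1)) < ε := by
    have ha : ε₂ * ((C + ‖L‖ + 1) * (2 * (K + 1))) = ε := by
      rw [hε₂, show ((C + ‖L‖ + 1) * (2 * (K + 1)) : ℝ)
          = 2 * (K + 1) * (C + ‖L‖ + 1) from by ring]
      exact div_mul_cancel₀ ε (by positivity)
    calc (C + ‖L‖) * τ * (2 * (K + 1))
        ≤ (C + ‖L‖ + 1) * τ * (2 * (K + 1)) :=
          mul_le_mul_of_nonneg_right
            (mul_le_mul_of_nonneg_right (by linarith) hτ0) (by positivity)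
      _ = τ * ((C + ‖L‖ + 1) * (2 * (K + 1))) := by ring
      _ < ε₂ * ((C + ‖L‖ + 1) * (2 * (K + 1))) :=
          mul_lt_mul_of_pos_right hMtail (by positivity)
      _ = ε := ha
  set B := ε₁ * G + (C + ‖L‖) * τ with hBdef
  have h3 : B * (2 * (K + 1)) = ε₁ * G * (2 * (K + 1)) + (C + ‖L‖) * τ * (2 * (K + 1)) := by
    ring
  have h4 : B * (2 * (K + 1)) < 2 * ε := by rw [h3]; linarith
  have h5 : B * K ≤ B * (K + 1) := mul_le_mul_of_nonneg_left (by linarith) hB0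
  have h6 : B * (2 * (K + 1)) = B * (K + 1) * 2 := by ring
  have h7 : B * (K + 1) < ε := by linarith [h6 ▸ h4]
  calc ‖phiA n a t₁ t₂ - L • (1 : Matrix (Fin n) (Fin n) ℂ)‖ ≤ B * K := hnorm
    _ ≤ B * (K + 1) := h5
    _ < ε := h7

lemma sqrt_bound {R u t₂ : ℝ} (hR : 0 < R) (hu : 1 ≤ u) (ht₂0 : 0 < t₂)
    (ht₂ : t₂ < 1 / (32 * R ^ 2)) : Real.sqrt (t₂ * (u ^ 2 + 1)) ≤ u / (4 * R) := by
  have hkey : t₂ * (u ^ 2 + 1) ≤ (u / (4 * R)) ^ 2 := by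
    have h1 : u ^ 2 + 1 ≤ 2 * u ^ 2 := by nlinarith
    have h2 : t₂ * (u ^ 2 + 1) ≤ (1 / (32 * R ^ 2)) * (2 * u ^ 2) := by nlinarith
    have h3 : (u / (4 * R)) ^ 2 = u ^ 2 / (16 * R ^ 2) := by
      rw [div_pow]; ring_nf
    rw [h3]
    calc t₂ * (u ^ 2 + 1) ≤ (1 / (32 * R ^ 2)) * (2 * u ^ 2) := h2
      _ = u ^ 2 / (16 * R ^ 2) := by field_simp; ring
  have := Real.sqrt_le_sqrt hkey
  rwa [Real.sqrt_sq (by positivity)] at this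


/-- If `a ∈ L^∞(ℝ)` has limits `a(−∞)`, `a(+∞)`, then
`φ^a(t₁,t₂) → a(−∞)·I` as `(t₁,t₂) → (+∞,0)` and `φ^a(t₁,t₂) → a(+∞)·I` as
`(t₁,t₂) → (−∞,0)`, in the ε–δ sense stated. -/
theorem phiA_limit_corners (n : ℕ) (hn : 1 ≤ n) (a : ℝ → ℂ)
    (ha_meas : Measurable a) (ha_bdd : ∃ C : ℝ, ∀ y : ℝ, ‖a y‖ ≤ C)
    (aminus aplus : ℂ)
    (haminus : Tendsto a atBot (𝓝 aminus)) (haplus : Tendsto a atTop (𝓝 aplus)) :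
    (∀ ε > (0 : ℝ), ∃ δ > (0 : ℝ), ∃ N > (0 : ℝ), ∀ t₁ t₂ : ℝ,
        0 < t₂ → t₂ < δ → N < t₁ →
        ‖phiA n a t₁ t₂ - aminus • (1 : Matrix (Fin n) (Fin n) ℂ)‖ < ε) ∧
      (∀ ε > (0 : ℝ), ∃ δ > (0 : ℝ), ∃ N > (0 : ℝ), ∀ t₁ t₂ : ℝ,
        0 < t₂ → t₂ < δ → t₁ < -N →
        ‖phiA n a t₁ t₂ - aplus • (1 : Matrix (Fin n) (Fin n) ℂ)‖ < ε) := by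
  obtain ⟨C, hC⟩ := ha_bdd
  have hreg1 : ∀ ε' > (0:ℝ), ∀ M > (0:ℝ), ∃ δ > (0:ℝ), ∃ N > (0:ℝ), ∀ t₁ t₂ : ℝ,
      0 < t₂ → t₂ < δ → N < t₁ → ∀ s : ℝ, |s| ≤ M →
        ‖a ((-t₁ + s) / (2 * Real.sqrt (t₂ * (t₁ ^ 2 + 1)))) - aminus‖ ≤ ε' := by
    intro ε' hε' M hM
    have hev : ∀ᶠ y in atBot, dist (a y) aminus < ε' :=
      Metric.tendsto_nhds.mp haminus ε' hε'
    obtain ⟨R₀, hR₀⟩ := eventually_atBot.mp hev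
    set R := max (-R₀) 1 with hRdef
    have hR0 : (0:ℝ) < R := lt_of_lt_of_le one_pos (le_max_right _ _)
    refine ⟨1 / (32 * R ^ 2), by positivity, 2 * M + 1, by positivity, ?_⟩
    intro t₁ t₂ ht₂0 ht₂δ ht₁ s hs
    have ht₁1 : 1 ≤ t₁ := by linarith
    have hsqrt : Real.sqrt (t₂ * (t₁ ^ 2 + 1)) ≤ t₁ / (4 * R) :=
      sqrt_bound hR0 ht₁1 ht₂0 ht₂δ
    have hsqrt0 : 0 < Real.sqrt (t₂ * (t₁ ^ 2 + 1)) :=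
      Real.sqrt_pos.mpr (by positivity)
    have hD0 : 0 < 2 * Real.sqrt (t₂ * (t₁ ^ 2 + 1)) := by positivity
    have harg : (-t₁ + s) / (2 * Real.sqrt (t₂ * (t₁ ^ 2 + 1))) ≤ -R := by
      rw [div_le_iff₀ hD0]
      have hRD : R * (2 * Real.sqrt (t₂ * (t₁ ^ 2 + 1))) ≤ t₁ / 2 := by
        calc R * (2 * Real.sqrt (t₂ * (t₁ ^ 2 + 1)))
            ≤ R * (2 * (t₁ / (4 * R))) := by
              apply mul_le_mul_of_nonneg_left (by linarith) hR0.le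
          _ = t₁ / 2 := by field_simp; ring
      have hsM : s ≤ M := (abs_le.mp hs).2
      nlinarith
    have hle : (-t₁ + s) / (2 * Real.sqrt (t₂ * (t₁ ^ 2 + 1))) ≤ R₀ := by
      have : -R ≤ R₀ := by
        have := le_max_left (-R₀) 1
        linarith
      linarith
    have := hR₀ _ hle
    rw [dist_eq_norm] at this
    exact this.le
  have hreg2 : ∀ ε' > (0:ℝ), ∀ M > (0:ℝ), ∃ δ > (0:ℝ), ∃ N > (0:ℝ), ∀ t₁ t₂ : ℝ,
      0 < t₂ → t₂ < δ → t₁ < -N → ∀ s : ℝ, |s| ≤ M →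
        ‖a ((-t₁ + s) / (2 * Real.sqrt (t₂ * (t₁ ^ 2 + 1)))) - aplus‖ ≤ ε' := by
    intro ε' hε' M hM
    have hev : ∀ᶠ y in atTop, dist (a y) aplus < ε' :=
      Metric.tendsto_nhds.mp haplus ε' hε'
    obtain ⟨R₀, hR₀⟩ := eventually_atTop.mp hev
    set R := max R₀ 1 with hRdef
    have hR0 : (0:ℝ) < R := lt_of_lt_of_le one_pos (le_max_right _ _)
    refine ⟨1 / (32 * R ^ 2), by positivity, 2 * M + 1, by positivity, ?_⟩
    intro t₁ t₂ ht₂0 ht₂δ ht₁ s hs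
    have hu1 : 1 ≤ -t₁ := by linarith
    have hsq : t₂ * (t₁ ^ 2 + 1) = t₂ * ((-t₁) ^ 2 + 1) := by ring_nf
    have hsqrt : Real.sqrt (t₂ * (t₁ ^ 2 + 1)) ≤ -t₁ / (4 * R) := by
      rw [hsq]
      exact sqrt_bound hR0 hu1 ht₂0 ht₂δ
    have hsqrt0 : 0 < Real.sqrt (t₂ * (t₁ ^ 2 + 1)) :=
      Real.sqrt_pos.mpr (by positivity)
    have hD0 : 0 < 2 * Real.sqrt (t₂ * (t₁ ^ 2 + 1)) := by positivity
    have harg : R ≤ (-t₁ + s) / (2 * Real.sqrt (t₂ * (t₁ ^ 2 + 1))) := by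
      rw [le_div_iff₀ hD0]
      have hRD : R * (2 * Real.sqrt (t₂ * (t₁ ^ 2 + 1))) ≤ -t₁ / 2 := by
        calc R * (2 * Real.sqrt (t₂ * (t₁ ^ 2 + 1)))
            ≤ R * (2 * (-t₁ / (4 * R))) := by
              apply mul_le_mul_of_nonneg_left (by linarith) hR0.le
          _ = -t₁ / 2 := by field_simp; ring
      have hsM : -M ≤ s := (abs_le.mp hs).1
      nlinarith
    have hle : R₀ ≤ (-t₁ + s) / (2 * Real.sqrt (t₂ * (t₁ ^ 2 + 1))) := by
      have := le_max_left R₀ 1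
      linarith
    have := hR₀ _ hle
    rw [dist_eq_norm] at this
    exact this.le
  constructor
  · intro ε hε
    exact master n a ha_meas C hC aminus (fun N t₁ => N < t₁) hreg1 hε
  · intro ε hε
    exact master n a ha_meas C hC aplus (fun N t₁ => t₁ < -N) hreg2 hε
end
end

section
/- Let a ∈ PC(ℝ̄,{0}). Then the matrix-valued function φ^a(t₁,t₂) = ∫_ℝ a((−t₁+s)/(2√(t₂(t₁²+1)))) H(s)[H(s)]^T ds, defined on Π = ℝ × (0,∞), extends to a continuous M_n(ℂ)-valued function on the compactification Π̄ = [−∞,+∞] × [0,+∞]. -/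
open MeasureTheory Filter Topology
open scoped ENNReal NNReal

noncomputable section

/-- `a ∈ PC(ℝ̄, {0})`: bounded, continuous away from `0`, with finite limits at `±∞`
and finite one-sided limits at `0`. -/
def IsPCSymbol (a : ℝ → ℂ) : Prop :=
  (∃ C : ℝ, ∀ y : ℝ, ‖a y‖ ≤ C) ∧
  ContinuousOn a ({0}ᶜ : Set ℝ) ∧
  (∃ l : ℂ, Tendsto a atBot (𝓝 l)) ∧ (∃ l : ℂ, Tendsto a atTop (𝓝 l)) ∧
  (∃ l : ℂ, Tendsto a (𝓝[<] (0 : ℝ)) (𝓝 l)) ∧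
  (∃ l : ℂ, Tendsto a (𝓝[>] (0 : ℝ)) (𝓝 l))

/-! ### Auxiliary results on Hermite functions -/

lemma iteratedDeriv_gauss_poly (m : ℕ) :
    ∃ P : Polynomial ℝ, ∀ y, iteratedDeriv m (fun x => Real.exp (-x ^ 2)) y
      = P.eval y * Real.exp (-y ^ 2) := by
  induction m with
  | zero => exact ⟨1, fun y => by simp [iteratedDeriv_zero]⟩
  | succ m ih =>
    obtain ⟨P, hP⟩ := ih
    refine ⟨P.derivative + Polynomial.C (-2) * Polynomial.X * P, fun y => ?_⟩
    rw [iteratedDeriv_succ]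
    have h1 : HasDerivAt (fun y : ℝ => -y ^ 2) (-(2 * y ^ 1)) y := (hasDerivAt_pow 2 y).neg
    have h2 : HasDerivAt (fun y : ℝ => Real.exp (-y ^ 2))
        (Real.exp (-y ^ 2) * (-(2 * y ^ 1))) y := h1.exp
    have h3 : HasDerivAt (fun y : ℝ => P.eval y * Real.exp (-y ^ 2))
        (P.derivative.eval y * Real.exp (-y ^ 2)
          + P.eval y * (Real.exp (-y ^ 2) * (-(2 * y ^ 1)))) y :=
      (P.hasDerivAt y).mul h2
    have : iteratedDeriv m (fun x => Real.exp (-x ^ 2))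
        = fun y => P.eval y * Real.exp (-y ^ 2) := funext hP
    rw [this, h3.deriv]
    simp only [Polynomial.eval_add, Polynomial.eval_mul, Polynomial.eval_C, Polynomial.eval_X]
    ring

lemma hermiteFun_poly (m : ℕ) :
    ∃ P : Polynomial ℝ, ∀ y, hermiteFun m y = P.eval y * Real.exp (-y ^ 2 / 2) := by
  obtain ⟨P, hP⟩ := iteratedDeriv_gauss_poly m
  refine ⟨Polynomial.C ((Real.sqrt (2 ^ m * m.factorial * Real.sqrt Real.pi))⁻¹ * (-1) ^ m) * P,
    fun y => ?_⟩
  have : Real.exp (y ^ 2) * Real.exp (-y ^ 2) = 1 := by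
    rw [← Real.exp_add]; simp
  simp only [hermiteFun, hermiteH, hP y, Polynomial.eval_mul, Polynomial.eval_C]
  linear_combination ((Real.sqrt (2 ^ m * m.factorial * Real.sqrt Real.pi))⁻¹ * (-1) ^ m *
    Polynomial.eval y P * Real.exp (-y ^ 2 / 2)) * this

lemma HHT_poly (n : ℕ) (j k : Fin n) :
    ∃ Q : Polynomial ℝ, ∀ y, HHT n y j k = Q.eval y * Real.exp (-y ^ 2) := by
  obtain ⟨P, hP⟩ := hermiteFun_poly j
  obtain ⟨R, hR⟩ := hermiteFun_poly k
  refine ⟨P * R, fun y => ?_⟩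
  have : Real.exp (-y ^ 2 / 2) * Real.exp (-y ^ 2 / 2) = Real.exp (-y ^ 2) := by
    rw [← Real.exp_add]; ring_nf
  simp only [HHT, Matrix.of_apply, hP y, hR y, Polynomial.eval_mul]
  rw [← this]; ring

lemma integrable_poly_gauss (Q : Polynomial ℝ) :
    Integrable (fun y : ℝ => Q.eval y * Real.exp (-y ^ 2)) := by
  have key : ∀ i : ℕ, Integrable (fun y : ℝ => y ^ i * Real.exp (-y ^ 2)) := by
    intro i
    have := integrable_rpow_mul_exp_neg_mul_sq (b := 1) zero_lt_one
      (s := (i : ℝ)) (by exact_mod_cast neg_one_lt_zero.trans_le (Nat.cast_nonneg i))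
    simpa [Real.rpow_natCast] using this
  have : (fun y : ℝ => Q.eval y * Real.exp (-y ^ 2))
      = fun y : ℝ => ∑ i ∈ Finset.range (Q.natDegree + 1),
        Q.coeff i * (y ^ i * Real.exp (-y ^ 2)) := by
    funext y
    rw [Polynomial.eval_eq_sum_range, Finset.sum_mul]
    simp [mul_assoc]
  rw [this]
  exact integrable_finset_sum _ fun i _ => (key i).const_mul _

lemma continuous_HHT (n : ℕ) (j k : Fin n) : Continuous fun y : ℝ => HHT n y j k := by
  obtain ⟨Q, hQ⟩ := HHT_poly n j k
  simp only [hQ]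
  fun_prop

lemma integrable_HHT (n : ℕ) (j k : Fin n) : Integrable (fun y : ℝ => HHT n y j k) := by
  obtain ⟨Q, hQ⟩ := HHT_poly n j k
  simp only [hQ]
  exact integrable_poly_gauss Q

/-! ### The boundary-value functions `bpAux`, `bmAux` on `ℝ≥0∞` -/

/-- Continuous extension of `x ↦ a x` from `(0,∞)` to `[0,∞]`. -/
def bpAux (a : ℝ → ℂ) (l0 linf : ℂ) (x : ℝ≥0∞) : ℂ :=
  if x = 0 then l0 else if x = ⊤ then linf else a x.toReal

/-- Continuous extension of `x ↦ a (−x)` from `(0,∞)` to `[0,∞]`. -/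
def bmAux (a : ℝ → ℂ) (l0 linf : ℂ) (x : ℝ≥0∞) : ℂ :=
  bpAux (fun y => a (-y)) l0 linf x

lemma tendsto_toReal_nhdsWithin_zero :
    Tendsto ENNReal.toReal (𝓝[≠] (0 : ℝ≥0∞)) (𝓝[>] (0 : ℝ)) := by
  apply tendsto_nhdsWithin_of_tendsto_nhds_of_eventually_within
  · have h := (ENNReal.tendsto_toReal (by simp : (0:ℝ≥0∞) ≠ ⊤)).mono_left
      (nhdsWithin_le_nhds (s := {(0:ℝ≥0∞)}ᶜ))
    rwa [ENNReal.toReal_zero] at h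
  · filter_upwards [self_mem_nhdsWithin,
      nhdsWithin_le_nhds (Iio_mem_nhds (by norm_num : (0:ℝ≥0∞) < 1))] with x hx hx1
    exact ENNReal.toReal_pos hx (ne_top_of_lt hx1)

lemma tendsto_toReal_nhdsWithin_top :
    Tendsto ENNReal.toReal (𝓝[≠] (⊤ : ℝ≥0∞)) atTop := by
  rw [tendsto_atTop]
  intro b
  filter_upwards [nhdsWithin_le_nhds (Ioi_mem_nhds (ENNReal.ofReal_lt_top (r := b))),
    self_mem_nhdsWithin] with x hx hx'
  exact (ENNReal.ofReal_le_iff_le_toReal hx').mp hx.le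

lemma continuous_bpAux {a : ℝ → ℂ} {l0 linf : ℂ}
    (hc : ContinuousOn a ({0}ᶜ : Set ℝ))
    (h0 : Tendsto a (𝓝[>] (0:ℝ)) (𝓝 l0)) (hinf : Tendsto a atTop (𝓝 linf)) :
    Continuous (bpAux a l0 linf) := by
  rw [continuous_iff_continuousAt]
  intro x
  rcases eq_or_ne x 0 with rfl | hx0
  · rw [ContinuousAt, ← nhdsNE_sup_pure (0:ℝ≥0∞), tendsto_sup]
    refine ⟨?_, tendsto_pure_nhds _ _⟩
    have hv : bpAux a l0 linf 0 = l0 := by simp [bpAux]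
    rw [hv]
    have key : Tendsto (fun y : ℝ≥0∞ => a y.toReal) (𝓝[≠] (0:ℝ≥0∞)) (𝓝 l0) :=
      h0.comp tendsto_toReal_nhdsWithin_zero
    refine key.congr' ?_
    filter_upwards [self_mem_nhdsWithin,
      nhdsWithin_le_nhds (Iio_mem_nhds (by norm_num : (0:ℝ≥0∞) < 1))] with y hy hy1
    simp only [Set.mem_compl_iff, Set.mem_singleton_iff] at hy
    rw [eq_comm]
    simp [bpAux, hy, (ne_top_of_lt (Set.mem_Iio.mp hy1))]
  rcases eq_or_ne x ⊤ with rfl | hxt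
  · rw [ContinuousAt, ← nhdsNE_sup_pure (⊤:ℝ≥0∞), tendsto_sup]
    refine ⟨?_, tendsto_pure_nhds _ _⟩
    have hv : bpAux a l0 linf ⊤ = linf := by simp [bpAux]
    rw [hv]
    have key : Tendsto (fun y : ℝ≥0∞ => a y.toReal) (𝓝[≠] (⊤:ℝ≥0∞)) (𝓝 linf) :=
      hinf.comp tendsto_toReal_nhdsWithin_top
    refine key.congr' ?_
    filter_upwards [self_mem_nhdsWithin,
      nhdsWithin_le_nhds (Ioi_mem_nhds (by norm_num : (1:ℝ≥0∞) < ⊤))] with y hy hy1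
    simp only [Set.mem_compl_iff, Set.mem_singleton_iff] at hy
    have : y ≠ 0 := by
      intro h; rw [h] at hy1; exact absurd hy1 (by norm_num)
    rw [eq_comm]
    simp [bpAux, hy, this]
  · have hU : {y : ℝ≥0∞ | y ≠ 0 ∧ y ≠ ⊤} ∈ 𝓝 x := by
      have : IsOpen {y : ℝ≥0∞ | y ≠ 0 ∧ y ≠ ⊤} :=
        (isOpen_compl_singleton (x := (0:ℝ≥0∞))).inter
          (isOpen_compl_singleton (x := (⊤:ℝ≥0∞)))
      exact this.mem_nhds ⟨hx0, hxt⟩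
    have hca : ContinuousAt (fun y : ℝ≥0∞ => a y.toReal) x := by
      have h1 : ContinuousAt ENNReal.toReal x := ENNReal.tendsto_toReal hxt
      have h2 : ContinuousAt a x.toReal :=
        hc.continuousAt (compl_singleton_mem_nhds (ENNReal.toReal_pos hx0 hxt).ne')
      exact h2.comp h1
    apply hca.congr
    filter_upwards [hU] with y hy
    simp [bpAux, hy.1, hy.2]

lemma norm_bpAux_le {a : ℝ → ℂ} {l0 linf : ℂ} {C : ℝ}
    (hC : ∀ y, ‖a y‖ ≤ C)
    (h0 : Tendsto a (𝓝[>] (0:ℝ)) (𝓝 l0)) (hinf : Tendsto a atTop (𝓝 linf)) :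
    ∀ x, ‖bpAux a l0 linf x‖ ≤ C := by
  intro x
  unfold bpAux
  split
  · exact le_of_tendsto h0.norm (Eventually.of_forall fun y => hC y)
  split
  · exact le_of_tendsto hinf.norm (Eventually.of_forall fun y => hC y)
  · exact hC _

/-! ### The function `DAux` on `EReal` -/

def DAux (s : ℝ) (u : EReal) : ℝ :=
  if u = ⊤ ∨ u = ⊥ then 1 else |s - u.toReal| / Real.sqrt (u.toReal ^ 2 + 1)

lemma DAux_coe (s t : ℝ) : DAux s (t : EReal) = |s - t| / Real.sqrt (t ^ 2 + 1) := by
  simp [DAux]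

lemma DAux_pos {s : ℝ} {u : EReal} (h : u ≠ (s : EReal)) : 0 < DAux s u := by
  unfold DAux
  split
  · norm_num
  · rename_i hu
    push_neg at hu
    apply div_pos
    · rw [abs_pos, sub_ne_zero]
      intro hs
      apply h
      lift u to ℝ using ⟨hu.1, hu.2⟩
      rw [EReal.toReal_coe] at hs
      rw [hs]
    · apply Real.sqrt_pos.mpr; positivity

lemma tendsto_absdiv_atTop (s : ℝ) :
    Tendsto (fun t : ℝ => |s - t| / Real.sqrt (t ^ 2 + 1)) atTop (𝓝 1) := by
  have hcont : ContinuousAt (fun r : ℝ => (1 - s * r) / Real.sqrt (1 + r ^ 2)) 0 := by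
    apply ContinuousAt.div
    · fun_prop
    · fun_prop
    · norm_num
  have hval : (1 - s * 0) / Real.sqrt (1 + 0 ^ 2) = 1 := by norm_num
  have key : Tendsto (fun t : ℝ => (1 - s * t⁻¹) / Real.sqrt (1 + (t⁻¹) ^ 2)) atTop (𝓝 1) := by
    have := hcont.tendsto.comp tendsto_inv_atTop_zero
    rwa [hval] at this
  refine key.congr' ?_
  filter_upwards [eventually_ge_atTop (max s 1)] with t ht
  have ht1 : (1:ℝ) ≤ t := le_trans (le_max_right s 1) ht
  have hts : s ≤ t := le_trans (le_max_left s 1) ht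
  have ht0 : 0 < t := lt_of_lt_of_le one_pos ht1
  have hsqrt : Real.sqrt (t ^ 2 + 1) = t * Real.sqrt (1 + (t⁻¹) ^ 2) := by
    rw [← Real.sqrt_sq ht0.le, ← Real.sqrt_mul (sq_nonneg t)]
    congr 1
    field_simp
    rw [Real.sq_sqrt (sq_nonneg t)]
  rw [eq_comm, abs_of_nonpos (by linarith), hsqrt]
  have hden : (0:ℝ) < Real.sqrt (1 + (t⁻¹) ^ 2) := Real.sqrt_pos.mpr (by positivity)
  field_simp
  ring

lemma tendsto_DAux_coe_atTop (s : ℝ) :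
    Tendsto (fun t : ℝ => DAux s (t : EReal)) atTop (𝓝 1) := by
  refine (tendsto_absdiv_atTop s).congr fun t => ?_
  simp [DAux]

lemma tendsto_DAux_coe_atBot (s : ℝ) :
    Tendsto (fun t : ℝ => DAux s (t : EReal)) atBot (𝓝 1) := by
  have h := (tendsto_absdiv_atTop (-s)).comp tendsto_neg_atBot_atTop
  refine h.congr fun t => ?_
  simp only [Function.comp_apply, DAux, EReal.coe_ne_top, EReal.coe_ne_bot, or_self, if_false,
    EReal.toReal_coe]
  rw [neg_sq]
  congr 1
  rw [abs_sub_comm]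
  congr 1
  ring

lemma continuous_DAux (s : ℝ) : Continuous (DAux s) := by
  rw [continuous_iff_continuousAt]
  intro u
  induction u using EReal.rec with
  | bot =>
    rw [ContinuousAt, ← nhdsNE_sup_pure (⊥ : EReal), tendsto_sup]
    refine ⟨?_, tendsto_pure_nhds _ _⟩
    rw [EReal.nhdsWithin_bot, tendsto_map'_iff]
    have : DAux s ⊥ = 1 := by simp [DAux]
    rw [this]
    exact tendsto_DAux_coe_atBot s
  | coe x =>
    have hU : {v : EReal | v ≠ ⊤ ∧ v ≠ ⊥} ∈ 𝓝 (x : EReal) :=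
      (((isOpen_compl_singleton (x := (⊤:EReal))).inter
        (isOpen_compl_singleton (x := (⊥:EReal))))).mem_nhds (by simp)
    have hca : ContinuousAt (fun v : EReal => |s - v.toReal| / Real.sqrt (v.toReal ^ 2 + 1))
        (x : EReal) := by
      have h1 : ContinuousAt EReal.toReal (x : EReal) :=
        EReal.tendsto_toReal (a := (x : EReal)) (by simp) (by simp)
      apply ContinuousAt.div
      · exact (continuous_abs.continuousAt).comp ((continuousAt_const.sub h1))
      · exact (Real.continuous_sqrt.continuousAt).comp ((h1.pow 2).add continuousAt_const)
      · have : (0:ℝ) < Real.sqrt ((EReal.toReal (x:EReal)) ^ 2 + 1) := by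
          apply Real.sqrt_pos.mpr; positivity
        exact this.ne'
    apply hca.congr
    filter_upwards [hU] with v hv
    simp [DAux, hv.1, hv.2]
  | top =>
    rw [ContinuousAt, ← nhdsNE_sup_pure (⊤ : EReal), tendsto_sup]
    refine ⟨?_, tendsto_pure_nhds _ _⟩
    rw [EReal.nhdsWithin_top, tendsto_map'_iff]
    have : DAux s ⊤ = 1 := by simp [DAux]
    rw [this]
    exact tendsto_DAux_coe_atTop s

lemma continuous_DAux_right (u : EReal) : Continuous (fun s : ℝ => DAux s u) := by
  unfold DAux
  split
  · exact continuous_const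
  · apply Continuous.div
    · fun_prop
    · fun_prop
    · intro s
      have : (0:ℝ) < Real.sqrt (u.toReal ^ 2 + 1) := by
        apply Real.sqrt_pos.mpr; positivity
      exact this.ne'

/-! ### The scale function `rhoAux` -/

def rhoAux (s : ℝ) (p : EReal × ℝ≥0∞) : ℝ≥0∞ :=
  ENNReal.ofReal (DAux s p.1) * (2 * p.2 ^ (1/2 : ℝ))⁻¹

lemma continuousAt_rhoAux (s : ℝ) (p : EReal × ℝ≥0∞) (hp : p.1 ≠ (s : EReal)) :
    ContinuousAt (rhoAux s) p := by
  unfold rhoAux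
  have h1 : ContinuousAt (fun q : EReal × ℝ≥0∞ => ENNReal.ofReal (DAux s q.1)) p :=
    ((ENNReal.continuous_ofReal.comp ((continuous_DAux s).comp continuous_fst))).continuousAt
  have h2 : ContinuousAt (fun q : EReal × ℝ≥0∞ => (2 * q.2 ^ (1/2 : ℝ))⁻¹) p := by
    apply Continuous.continuousAt
    apply continuous_inv.comp
    exact (ENNReal.continuous_const_mul (by norm_num)).comp
      (ENNReal.continuous_rpow_const.comp continuous_snd)
  exact ENNReal.Tendsto.mul h1 (Or.inl (by
      simp only [ne_eq, ENNReal.ofReal_eq_zero, not_le]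
      exact DAux_pos hp))
    h2 (Or.inr ENNReal.ofReal_ne_top)

lemma measurable_rhoAux_right (p : EReal × ℝ≥0∞) :
    Measurable (fun s : ℝ => rhoAux s p) := by
  unfold rhoAux
  exact (ENNReal.measurable_ofReal.comp (continuous_DAux_right p.1).measurable).mul_const _

lemma rhoAux_interior (s t₁ t₂ : ℝ) (ht₂ : 0 < t₂) :
    rhoAux s ((t₁ : EReal), ENNReal.ofReal t₂)
      = ENNReal.ofReal (|s - t₁| / (2 * Real.sqrt (t₂ * (t₁ ^ 2 + 1)))) := by
  have hs2 : (0:ℝ) < Real.sqrt t₂ := Real.sqrt_pos.mpr ht₂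
  have hs1 : (0:ℝ) < Real.sqrt (t₁ ^ 2 + 1) := Real.sqrt_pos.mpr (by positivity)
  unfold rhoAux
  rw [DAux_coe]
  have hr : (ENNReal.ofReal t₂) ^ (1/2 : ℝ) = ENNReal.ofReal (Real.sqrt t₂) := by
    rw [ENNReal.ofReal_rpow_of_pos ht₂, Real.sqrt_eq_rpow]
  rw [hr]
  have h2 : (2 : ℝ≥0∞) * ENNReal.ofReal (Real.sqrt t₂) = ENNReal.ofReal (2 * Real.sqrt t₂) := by
    rw [ENNReal.ofReal_mul (by norm_num : (0:ℝ) ≤ 2)]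
    norm_num
  rw [h2, ← div_eq_mul_inv, ← ENNReal.ofReal_div_of_pos (by positivity)]
  congr 1
  rw [Real.sqrt_mul ht₂.le, div_div, div_eq_div_iff (by positivity) (by positivity)]
  ring

/-! ### The extended integrand `LAux` -/

def LAux (a : ℝ → ℂ) (l0p l0m lp lm : ℂ) (s : ℝ) (p : EReal × ℝ≥0∞) : ℂ :=
  if p.1 < (s : EReal) then bpAux a l0p lp (rhoAux s p) else bmAux a l0m lm (rhoAux s p)

lemma continuousAt_LAux {a : ℝ → ℂ} {l0p l0m lp lm : ℂ}
    (hbp : Continuous (bpAux a l0p lp)) (hbm : Continuous (bmAux a l0m lm))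
    (s : ℝ) (p : EReal × ℝ≥0∞) (hp : p.1 ≠ (s : EReal)) :
    ContinuousAt (fun q => LAux a l0p l0m lp lm s q) p := by
  rcases hp.lt_or_gt with h | h
  · have hca : ContinuousAt (fun q => bpAux a l0p lp (rhoAux s q)) p :=
      hbp.continuousAt.comp (continuousAt_rhoAux s p hp)
    apply hca.congr
    filter_upwards [(isOpen_Iio.preimage continuous_fst).mem_nhds
      (by exact h : p ∈ (Prod.fst ⁻¹' Set.Iio (s : EReal)))] with q hq
    have hq' : q.1 < (s : EReal) := hq
    simp only [LAux]
    rw [if_pos hq']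
  · have hca : ContinuousAt (fun q => bmAux a l0m lm (rhoAux s q)) p :=
      hbm.continuousAt.comp (continuousAt_rhoAux s p hp)
    apply hca.congr
    filter_upwards [(isOpen_Ioi.preimage continuous_fst).mem_nhds
      (by exact h : p ∈ (Prod.fst ⁻¹' Set.Ioi (s : EReal)))] with q hq
    have hq' : (s : EReal) < q.1 := hq
    simp only [LAux]
    rw [if_neg (not_lt.mpr hq'.le)]

lemma measurable_LAux_right {a : ℝ → ℂ} {l0p l0m lp lm : ℂ}
    (hbp : Continuous (bpAux a l0p lp)) (hbm : Continuous (bmAux a l0m lm))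
    (p : EReal × ℝ≥0∞) :
    Measurable (fun s : ℝ => LAux a l0p l0m lp lm s p) := by
  unfold LAux
  have hset : MeasurableSet {s : ℝ | p.1 < (s : EReal)} := by
    have : Continuous (fun s : ℝ => (s : EReal)) := continuous_coe_real_ereal
    exact (isOpen_Ioi.preimage this).measurableSet
  exact Measurable.ite hset
    (hbp.measurable.comp (measurable_rhoAux_right p))
    (hbm.measurable.comp (measurable_rhoAux_right p))

lemma norm_LAux_le {a : ℝ → ℂ} {l0p l0m lp lm : ℂ} {C : ℝ}
    (hC : ∀ y, ‖a y‖ ≤ C)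
    (hl0p : Tendsto a (𝓝[>] (0:ℝ)) (𝓝 l0p)) (hlp : Tendsto a atTop (𝓝 lp))
    (hl0m : Tendsto (fun y => a (-y)) (𝓝[>] (0:ℝ)) (𝓝 l0m))
    (hlm : Tendsto (fun y => a (-y)) atTop (𝓝 lm))
    (s : ℝ) (p : EReal × ℝ≥0∞) :
    ‖LAux a l0p l0m lp lm s p‖ ≤ C := by
  unfold LAux
  split
  · exact norm_bpAux_le hC hl0p hlp _
  · exact norm_bpAux_le (fun y => hC (-y)) hl0m hlm _

/-! ### Main theorem -/

/-- For `a ∈ PC(ℝ̄, {0})`, the matrix function `φ^a` on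
`Π = ℝ × (0,∞)` extends continuously to `Π̄ = [−∞,+∞] × [0,+∞]`
(modelled as `EReal × ℝ≥0∞`). -/
theorem phiA_extends_continuously_matrix_PC (n : ℕ) (hn : 1 ≤ n) (a : ℝ → ℂ)
    (ha : IsPCSymbol a) :
    ∃ F : EReal × ENNReal → Matrix (Fin n) (Fin n) ℂ,
      Continuous F ∧
      ∀ (t₁ t₂ : ℝ), 0 < t₂ →
        F ((t₁ : EReal), ENNReal.ofReal t₂) = phiA n a t₁ t₂ := by
  obtain ⟨⟨C, hC⟩, hcont, ⟨lm, hlm⟩, ⟨lp, hlp⟩, ⟨l0m, hl0m⟩, ⟨l0p, hl0p⟩⟩ := ha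
  have hnegmap : Tendsto (fun y : ℝ => -y) (𝓝[>] (0:ℝ)) (𝓝[<] (0:ℝ)) := by
    apply tendsto_nhdsWithin_of_tendsto_nhds_of_eventually_within
    · have := (continuous_neg.tendsto (0:ℝ)).mono_left (nhdsWithin_le_nhds (s := Set.Ioi (0:ℝ)))
      simpa using this
    · filter_upwards [self_mem_nhdsWithin] with y hy
      exact Set.mem_Iio.mpr (neg_neg_of_pos (Set.mem_Ioi.mp hy))
  have hl0m' : Tendsto (fun y : ℝ => a (-y)) (𝓝[>] (0:ℝ)) (𝓝 l0m) := hl0m.comp hnegmap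
  have hlm' : Tendsto (fun y : ℝ => a (-y)) atTop (𝓝 lm) := hlm.comp tendsto_neg_atTop_atBot
  have hcont' : ContinuousOn (fun y : ℝ => a (-y)) ({0}ᶜ : Set ℝ) := by
    apply ContinuousOn.comp hcont continuous_neg.continuousOn
    intro y hy
    simp only [Set.mem_compl_iff, Set.mem_singleton_iff, neg_eq_zero] at *
    exact hy
  have hbp : Continuous (bpAux a l0p lp) := continuous_bpAux hcont hl0p hlp
  have hbm : Continuous (bmAux a l0m lm) := continuous_bpAux hcont' hl0m' hlm'
  refine ⟨fun p => Matrix.of fun j k =>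
    ∫ s : ℝ, LAux a l0p l0m lp lm s p * (HHT n s j k : ℂ), ?_, ?_⟩
  · apply continuous_matrix
    intro j k
    rw [continuous_iff_continuousAt]
    intro p₀
    apply continuousAt_of_dominated (bound := fun s => C * |HHT n s j k|)
    · exact Eventually.of_forall fun p =>
        (((measurable_LAux_right hbp hbm p).mul
          (Complex.measurable_ofReal.comp (continuous_HHT n j k).measurable)).aestronglyMeasurable)
    · refine Eventually.of_forall fun p => ae_of_all _ fun s => ?_
      rw [norm_mul]
      have h1 : ‖LAux a l0p l0m lp lm s p‖ ≤ C := norm_LAux_le hC hl0p hlp hl0m' hlm' s p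
      have h2 : ‖(HHT n s j k : ℂ)‖ = |HHT n s j k| := by
        rw [Complex.norm_real, Real.norm_eq_abs]
      rw [h2]
      exact mul_le_mul_of_nonneg_right h1 (abs_nonneg _)
    · exact ((integrable_HHT n j k).abs.const_mul C)
    · have hae : ∀ᵐ s : ℝ, p₀.1 ≠ (s : EReal) := by
        rw [ae_iff]
        refine measure_mono_null (fun s hs => ?_) (measure_singleton (p₀.1.toReal))
        simp only [Set.mem_setOf_eq, not_not] at hs
        simp [hs]
      filter_upwards [hae] with s hs
      exact (continuousAt_LAux hbp hbm s p₀ hs).mul continuousAt_const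
  · intro t₁ t₂ ht₂
    ext j k
    show (∫ s : ℝ, LAux a l0p l0m lp lm s ((t₁ : EReal), ENNReal.ofReal t₂)
        * (HHT n s j k : ℂ))
      = ∫ s : ℝ, a ((-t₁ + s) / (2 * Real.sqrt (t₂ * (t₁ ^ 2 + 1)))) * (HHT n s j k : ℂ)
    apply integral_congr_ae
    have hae : ∀ᵐ s : ℝ, s ≠ t₁ := by
      rw [ae_iff]
      have : {s : ℝ | ¬ s ≠ t₁} = {t₁} := by ext s; simp
      rw [this]
      exact measure_singleton t₁
    filter_upwards [hae] with s hst
    congr 1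
    set d := 2 * Real.sqrt (t₂ * (t₁ ^ 2 + 1)) with hd_def
    have hd : 0 < d := mul_pos two_pos (Real.sqrt_pos.mpr (by positivity))
    have hrho := rhoAux_interior s t₁ t₂ ht₂
    rcases hst.lt_or_gt with h | h
    · -- s < t₁, argument is negative, use `bmAux`
      have hcond : ¬ ((t₁ : EReal) < (s : EReal)) :=
        not_lt.mpr (le_of_lt (EReal.coe_lt_coe_iff.mpr h))
      simp only [LAux]
      rw [if_neg (by exact hcond), hrho]
      have habs : |s - t₁| = -(s - t₁) := abs_of_neg (by linarith)
      have hpos : 0 < |s - t₁| / d := div_pos (abs_pos.mpr (sub_ne_zero.mpr hst)) hd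
      have hne0 : ENNReal.ofReal (|s - t₁| / d) ≠ 0 := (ENNReal.ofReal_pos.mpr hpos).ne'
      unfold bmAux bpAux
      rw [if_neg hne0, if_neg ENNReal.ofReal_ne_top, ENNReal.toReal_ofReal hpos.le]
      congr 1
      rw [habs]
      ring
    · -- t₁ < s, argument is positive, use `bpAux`
      have hcond : ((t₁ : EReal) < (s : EReal)) := EReal.coe_lt_coe_iff.mpr h
      simp only [LAux]
      rw [if_pos (by exact hcond), hrho]
      have habs : |s - t₁| = s - t₁ := abs_of_pos (by linarith)
      have hpos : 0 < |s - t₁| / d := div_pos (abs_pos.mpr (sub_ne_zero.mpr hst)) hd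
      have hne0 : ENNReal.ofReal (|s - t₁| / d) ≠ 0 := (ENNReal.ofReal_pos.mpr hpos).ne'
      unfold bpAux
      rw [if_neg hne0, if_neg ENNReal.ofReal_ne_top, ENNReal.toReal_ofReal hpos.le]
      congr 1
      rw [habs]
      ring
end
end
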